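/- Let 1/2 < α < 1, γ > 0 and t > 0. Then (γ / Γ(2α−1)) · ∫₀ᵗ (t−s)^{2α−2} · E_{2α−1}(γ s^{2α−1}) ds ≤ E_{2α−1}(γ t^{2α−1}), where the integral is the (interval) Lebesgue integral over s ∈ (0, t). -/

import Mathlib

open Real MeasureTheory intervalIntegral Set Filter

/-- From log-convexity of Gamma: `Γ(x+1) ≤ Γ(x+β) * (x+β)^(1-β)` for `x ≥ 1`, `0 < β < 1`. -/
lemma gamma_ratio_aux {x β : ℝ} (hx : 1 ≤ x) (hβ : 0 < β) (hβ1 : β < 1) :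
    Real.Gamma (x + 1) ≤ Real.Gamma (x + β) * (x + β) ^ (1 - β) := by
  have hx0 : (0:ℝ) < x := lt_of_lt_of_le one_pos hx
  have hxβ : (0:ℝ) < x + β := by linarith
  have hp : x + β ∈ Ioi (0:ℝ) := hxβ
  have hq : x + β + 1 ∈ Ioi (0:ℝ) := by simp; linarith
  have hcv := Real.convexOn_log_Gamma.2 hp hq hβ.le (by linarith : (0:ℝ) ≤ 1 - β) (by ring)
  have hcomb : β • (x + β) + (1 - β) • (x + β + 1) = x + 1 := by simp [smul_eq_mul]; ring
  rw [hcomb] at hcv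
  have hΓβ : 0 < Real.Gamma (x + β) := Real.Gamma_pos_of_pos hxβ
  have hΓ1 : 0 < Real.Gamma (x + 1) := Real.Gamma_pos_of_pos (by linarith)
  have hrec : Real.Gamma (x + β + 1) = (x + β) * Real.Gamma (x + β) := Real.Gamma_add_one hxβ.ne'
  simp only [Function.comp_apply, smul_eq_mul] at hcv
  rw [hrec, Real.log_mul hxβ.ne' hΓβ.ne'] at hcv
  have hcv2 : Real.log (Real.Gamma (x + 1)) ≤
      Real.log (Real.Gamma (x + β)) + (1 - β) * Real.log (x + β) := by nlinarith
  have := Real.exp_le_exp.mpr hcv2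
  rwa [Real.exp_log hΓ1, Real.exp_add, Real.exp_log hΓβ, ← Real.log_rpow hxβ,
    Real.exp_log (Real.rpow_pos_of_pos hxβ _)] at this

lemma gamma_ratio {x β : ℝ} (hx : 1 ≤ x) (hβ : 0 < β) (hβ1 : β < 1) :
    Real.Gamma x * x ^ β / 2 ≤ Real.Gamma (x + β) := by
  have hx0 : (0:ℝ) < x := lt_of_lt_of_le one_pos hx
  have hxβ : (0:ℝ) < x + β := by linarith
  have h1 := gamma_ratio_aux hx hβ hβ1
  rw [Real.Gamma_add_one hx0.ne'] at h1
  have h2 : (x + β) ^ (1 - β) ≤ (2 * x) ^ (1 - β) :=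
    Real.rpow_le_rpow hxβ.le (by linarith) (by linarith)
  have h3 : (2 * x) ^ (1 - β) = 2 ^ (1 - β) * x ^ (1 - β) :=
    Real.mul_rpow (by norm_num) hx0.le
  have h4 : (2:ℝ) ^ (1 - β) ≤ 2 := by
    calc (2:ℝ) ^ (1 - β) ≤ 2 ^ (1:ℝ) :=
          Real.rpow_le_rpow_of_exponent_le (by norm_num) (by linarith)
      _ = 2 := Real.rpow_one 2
  have hΓβ : 0 < Real.Gamma (x + β) := Real.Gamma_pos_of_pos hxβ
  have hΓx : 0 < Real.Gamma x := Real.Gamma_pos_of_pos hx0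
  have hxb : (0:ℝ) < x ^ β := Real.rpow_pos_of_pos hx0 _
  have hx1b : (0:ℝ) < x ^ (1 - β) := Real.rpow_pos_of_pos hx0 _
  -- x = x^β * x^(1-β)
  have hxsplit : x ^ β * x ^ (1 - β) = x := by
    rw [← Real.rpow_add hx0]; simp
  have key : x * Real.Gamma x ≤ Real.Gamma (x + β) * (2 * x ^ (1 - β)) := by
    calc x * Real.Gamma x ≤ Real.Gamma (x + β) * (x + β) ^ (1 - β) := h1
      _ ≤ Real.Gamma (x + β) * (2 * x ^ (1 - β)) := by
          apply mul_le_mul_of_nonneg_left _ hΓβ.le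
          calc (x + β) ^ (1 - β) ≤ 2 ^ (1 - β) * x ^ (1 - β) := by rw [← h3]; exact h2
            _ ≤ 2 * x ^ (1 - β) := mul_le_mul_of_nonneg_right h4 hx1b.le
  nlinarith [mul_pos hΓβ hx1b]

lemma mittagLeffler_summable {β z : ℝ} (hβ : 0 < β) (hβ1 : β < 1) (hz : 0 ≤ z) :
    Summable (fun k : ℕ => z ^ k / Real.Gamma ((k : ℝ) * β + 1)) := by
  apply summable_of_ratio_norm_eventually_le (r := 1/2) (by norm_num)
  have htend : Tendsto (fun k : ℕ => (k : ℝ) * β + 1) atTop atTop :=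
    (tendsto_natCast_atTop_atTop.atTop_mul_const hβ).atTop_add tendsto_const_nhds
  filter_upwards [htend.eventually_ge_atTop ((4 * z + 1) ^ (1/β)), htend.eventually_ge_atTop 1]
    with k hk hk1
  set x : ℝ := (k : ℝ) * β + 1 with hxdef
  have hx0 : (0:ℝ) < x := lt_of_lt_of_le one_pos hk1
  have hxβ : (0:ℝ) < x + β := by linarith
  have hΓx : 0 < Real.Gamma x := Real.Gamma_pos_of_pos hx0
  have hΓxβ : 0 < Real.Gamma (x + β) := Real.Gamma_pos_of_pos hxβ
  have hxb : 4 * z ≤ x ^ β := by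
    have h0 : ((4 * z + 1) ^ (1/β)) ^ β = 4 * z + 1 := by
      rw [← Real.rpow_mul (by linarith), one_div, inv_mul_cancel₀ hβ.ne', Real.rpow_one]
    have h1 : ((4 * z + 1) ^ (1/β)) ^ β ≤ x ^ β :=
      Real.rpow_le_rpow (Real.rpow_nonneg (by linarith) _) hk hβ.le
    rw [h0] at h1; linarith
  have key : 2 * z * Real.Gamma x ≤ Real.Gamma (x + β) := by
    have := gamma_ratio hk1 hβ hβ1
    nlinarith
  have hcast : ((k + 1 : ℕ) : ℝ) * β + 1 = x + β := by push_cast [hxdef]; ring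
  rw [hcast, Real.norm_of_nonneg (by positivity), Real.norm_of_nonneg (by positivity),
    show (1/2 : ℝ) * (z ^ k / Real.Gamma x) = z ^ k / (2 * Real.Gamma x) by ring,
    div_le_div_iff₀ hΓxβ (by positivity)]
  nlinarith [pow_nonneg hz k, pow_succ z k, mul_le_mul_of_nonneg_left key (pow_nonneg hz k)]

lemma beta_eqOn {a b : ℝ} :
    Set.EqOn (fun x : ℝ => (x : ℂ) ^ ((a : ℂ) - 1) * ((1 : ℂ) - x) ^ ((b : ℂ) - 1))
      (fun x : ℝ => ((x ^ (a - 1) * (1 - x) ^ (b - 1) : ℝ) : ℂ)) (Set.Icc 0 1) := by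
  intro x hx
  simp only
  rw [Complex.ofReal_mul, Complex.ofReal_cpow hx.1, Complex.ofReal_cpow (by linarith [hx.2] : (0:ℝ) ≤ 1 - x)]
  push_cast
  ring_nf

lemma beta_integrable {a b : ℝ} (ha : 0 < a) (hb : 0 < b) :
    IntervalIntegrable (fun x : ℝ => x ^ (a - 1) * (1 - x) ^ (b - 1)) volume 0 1 := by
  have hc := Complex.betaIntegral_convergent (u := a) (v := b) (by simpa using ha) (by simpa using hb)
  rw [intervalIntegrable_iff_integrableOn_Ioc_of_le (by norm_num)] at hc ⊢
  have hre := hc.re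
  refine MeasureTheory.IntegrableOn.congr_fun hre ?_ measurableSet_Ioc
  intro x hx
  have h2 := beta_eqOn (a := a) (b := b) (Set.mem_Icc.mpr ⟨hx.1.le, hx.2⟩)
  simp only at h2
  simp [h2, Complex.ofReal_re]

lemma beta_eval {a b : ℝ} (ha : 0 < a) (hb : 0 < b) :
    ∫ x in (0:ℝ)..1, x ^ (a - 1) * (1 - x) ^ (b - 1) =
      Real.Gamma a * Real.Gamma b / Real.Gamma (a + b) := by
  have h := Complex.Gamma_mul_Gamma_eq_betaIntegral (s := a) (t := b)
    (by simpa using ha) (by simpa using hb)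
  have hab : Real.Gamma (a + b) ≠ 0 := (Real.Gamma_pos_of_pos (by linarith)).ne'
  have hB : Complex.betaIntegral a b =
      ((∫ x in (0:ℝ)..1, x ^ (a - 1) * (1 - x) ^ (b - 1) : ℝ) : ℂ) := by
    rw [Complex.betaIntegral, ← intervalIntegral.integral_ofReal]
    exact intervalIntegral.integral_congr (by simpa using beta_eqOn (a := a) (b := b))
  rw [hB, ← Complex.ofReal_add, Complex.Gamma_ofReal, Complex.Gamma_ofReal,
    Complex.Gamma_ofReal, ← Complex.ofReal_mul, ← Complex.ofReal_mul] at h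
  have := Complex.ofReal_inj.mp h
  field_simp at this ⊢
  linarith [this]

lemma beta_scaled_eqOn {a b t : ℝ} (ht : 0 < t) :
    Set.EqOn (fun x : ℝ => (t - t * x) ^ (b - 1) * (t * x) ^ (a - 1))
      (fun x : ℝ => t ^ (b - 1) * t ^ (a - 1) * ((1 - x) ^ (b - 1) * x ^ (a - 1)))
      (Set.Icc 0 1) := by
  intro x hx
  simp only
  have h1 : t - t * x = t * (1 - x) := by ring
  rw [h1, Real.mul_rpow ht.le (by linarith [hx.2]), Real.mul_rpow ht.le hx.1]
  ring

lemma beta_scaled {a b t : ℝ} (ha : 0 < a) (hb : 0 < b) (ht : 0 < t) :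
    ∫ s in (0:ℝ)..t, (t - s) ^ (b - 1) * s ^ (a - 1) =
      t ^ (a + b - 1) * (Real.Gamma a * Real.Gamma b / Real.Gamma (a + b)) := by
  have h := intervalIntegral.integral_comp_mul_left
    (fun s : ℝ => (t - s) ^ (b - 1) * s ^ (a - 1)) (a := 0) (b := 1) ht.ne'
  simp only [mul_zero, mul_one, smul_eq_mul] at h
  have h2 : (∫ x in (0:ℝ)..1, (t - t * x) ^ (b - 1) * (t * x) ^ (a - 1)) =
      t ^ (b - 1) * t ^ (a - 1) * ∫ x in (0:ℝ)..1, x ^ (a - 1) * (1 - x) ^ (b - 1) := by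
    rw [← intervalIntegral.integral_const_mul]
    refine intervalIntegral.integral_congr ?_
    intro x hx
    rw [Set.uIcc_of_le (by norm_num : (0:ℝ) ≤ 1)] at hx
    have := beta_scaled_eqOn (a := a) (b := b) ht hx
    simp only at this ⊢
    rw [this]; ring
  have ht1 : (∫ s in (0:ℝ)..t, (t - s) ^ (b - 1) * s ^ (a - 1)) =
      t * ∫ x in (0:ℝ)..1, (t - t * x) ^ (b - 1) * (t * x) ^ (a - 1) := by
    rw [h]; field_simp
  rw [ht1, h2, beta_eval ha hb]
  rw [show t * (t ^ (b - 1) * t ^ (a - 1) * (Real.Gamma a * Real.Gamma b / Real.Gamma (a + b)))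
      = (t * (t ^ (b - 1) * t ^ (a - 1))) * (Real.Gamma a * Real.Gamma b / Real.Gamma (a + b)) by ring]
  congr 1
  have : t ^ (a + b - 1) = t ^ ((b - 1) + (a - 1) + 1) := by ring_nf
  rw [this, Real.rpow_add ht, Real.rpow_add ht, Real.rpow_one]
  ring

lemma beta_integrable_scaled {a b t : ℝ} (ha : 0 < a) (hb : 0 < b) (ht : 0 < t) :
    IntervalIntegrable (fun s : ℝ => (t - s) ^ (b - 1) * s ^ (a - 1)) volume 0 t := by
  have h0 := ((beta_integrable ha hb).comp_mul_right (c := t⁻¹)).const_mul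
    (t ^ (a - 1) * t ^ (b - 1))
  have hb0 : (0:ℝ) / t⁻¹ = 0 := by simp
  have hb1 : (1:ℝ) / t⁻¹ = t := by field_simp
  rw [hb0, hb1] at h0
  rw [intervalIntegrable_iff_integrableOn_Ioc_of_le ht.le] at h0 ⊢
  refine MeasureTheory.IntegrableOn.congr_fun h0 ?_ measurableSet_Ioc
  intro s hs
  have hs0 : 0 ≤ s := hs.1.le
  have hst : 0 ≤ t - s := by linarith [hs.2]
  simp only
  rw [show s * t⁻¹ = s / t by ring, Real.div_rpow hs0 ht.le,
    show 1 - s / t = (t - s) / t by field_simp,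
    Real.div_rpow hst ht.le]
  have hta : (0:ℝ) < t ^ (a - 1) := Real.rpow_pos_of_pos ht _
  have htb : (0:ℝ) < t ^ (b - 1) := Real.rpow_pos_of_pos ht _
  field_simp
/-- The one-parameter Mittag-Leffler function `E_β(z) = Σ_{k=0}^∞ z^k / Γ(kβ + 1)`. -/
noncomputable def mittagLeffler (β z : ℝ) : ℝ :=
  ∑' k : ℕ, z ^ k / Real.Gamma ((k : ℝ) * β + 1)

/-- **Statement 0** (Lemma 2.6, inequality form): for `1/2 < α < 1`, `γ > 0` and `t > 0`,
`(γ / Γ(2α−1)) ∫₀ᵗ (t−s)^{2α−2} E_{2α−1}(γ s^{2α−1}) ds ≤ E_{2α−1}(γ t^{2α−1})`. -/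
theorem mittagLeffler_integral_le (α γ t : ℝ) (hα : 1 / 2 < α) (hα' : α < 1)
    (hγ : 0 < γ) (ht : 0 < t) :
    γ / Real.Gamma (2 * α - 1) *
        ∫ s in (0 : ℝ)..t,
          (t - s) ^ (2 * α - 2) * mittagLeffler (2 * α - 1) (γ * s ^ (2 * α - 1)) ≤
      mittagLeffler (2 * α - 1) (γ * t ^ (2 * α - 1)) := by
  set β := 2 * α - 1 with hβdef
  have hβ : 0 < β := by rw [hβdef]; linarith
  have hβ1 : β < 1 := by rw [hβdef]; linarith
  have hΓβ : 0 < Real.Gamma β := Real.Gamma_pos_of_pos hβ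
  have h2α2 : 2 * α - 2 = β - 1 := by rw [hβdef]; ring
  rw [h2α2]
  set z := γ * t ^ β with hzdef
  have hz0 : 0 ≤ z := mul_nonneg hγ.le (Real.rpow_nonneg ht.le _)
  set F : ℕ → ℝ := fun j => z ^ j / Real.Gamma ((j : ℝ) * β + 1) with hFdef
  have hF : Summable F := mittagLeffler_summable hβ hβ1 hz0
  have hak : ∀ k : ℕ, (0:ℝ) < (k : ℝ) * β + 1 := fun k => by positivity
  have hGk : ∀ k : ℕ, 0 < Real.Gamma ((k : ℝ) * β + 1) := fun k =>
    Real.Gamma_pos_of_pos (hak k)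
  set g : ℕ → ℝ → ℝ :=
    fun k s => (t - s) ^ (β - 1) * ((γ * s ^ β) ^ k / Real.Gamma ((k : ℝ) * β + 1)) with hgdef
  have hpow : ∀ s : ℝ, 0 ≤ s → ∀ k : ℕ, (γ * s ^ β) ^ k = γ ^ k * s ^ (β * (k : ℝ)) := by
    intro s hs k
    rw [mul_pow, ← Real.rpow_natCast (s ^ β) k, ← Real.rpow_mul hs]
  -- integrability of each term
  have hint : ∀ k : ℕ, MeasureTheory.IntegrableOn (g k) (Set.Ioc 0 t) MeasureTheory.volume := by
    intro k
    have h0 := (beta_integrable_scaled (a := (k : ℝ) * β + 1) (b := β) (hak k) hβ ht).const_mul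
      (γ ^ k / Real.Gamma ((k : ℝ) * β + 1))
    rw [intervalIntegrable_iff_integrableOn_Ioc_of_le ht.le] at h0
    refine MeasureTheory.IntegrableOn.congr_fun h0 ?_ measurableSet_Ioc
    intro s hs
    simp only [hgdef]
    rw [hpow s hs.1.le k, show (k : ℝ) * β + 1 - 1 = β * (k : ℝ) by ring]
    ring
  -- value of each term integral
  have hval : ∀ k : ℕ, ∫ s in Set.Ioc (0:ℝ) t, g k s =
      (Real.Gamma β / γ) * F (k + 1) := by
    intro k
    have heq : Set.EqOn (g k)
        (fun s => (γ ^ k / Real.Gamma ((k : ℝ) * β + 1)) *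
          ((t - s) ^ (β - 1) * s ^ ((k : ℝ) * β + 1 - 1))) (Set.Ioc 0 t) := by
      intro s hs
      simp only [hgdef]
      rw [hpow s hs.1.le k, show (k : ℝ) * β + 1 - 1 = β * (k : ℝ) by ring]
      ring
    rw [MeasureTheory.setIntegral_congr_fun measurableSet_Ioc heq,
      MeasureTheory.integral_const_mul, ← intervalIntegral.integral_of_le ht.le,
      beta_scaled (hak k) hβ ht]
    have hexp : (k : ℝ) * β + 1 + β - 1 = β * ((k : ℝ) + 1) := by ring
    have htpow : t ^ ((k : ℝ) * β + 1 + β - 1) = (t ^ β) ^ (k + 1) := by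
      rw [hexp, Real.rpow_mul ht.le, ← Real.rpow_natCast (t ^ β) (k + 1)]
      push_cast
      ring_nf
    have hargs : (k : ℝ) * β + 1 + β = ((k + 1 : ℕ) : ℝ) * β + 1 := by push_cast; ring
    rw [htpow, hargs]
    simp only [hFdef, hzdef]
    have h1 := (hGk k).ne'
    have h2 := (hGk (k + 1)).ne'
    rw [mul_pow]
    field_simp
    ring
  -- summability of the integrals of norms
  have hnorm : ∀ k : ℕ, ∫ s in Set.Ioc (0:ℝ) t, ‖g k s‖ = ∫ s in Set.Ioc (0:ℝ) t, g k s := by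
    intro k
    refine MeasureTheory.setIntegral_congr_fun measurableSet_Ioc ?_
    intro s hs
    refine Real.norm_of_nonneg ?_
    exact mul_nonneg (Real.rpow_nonneg (by linarith [hs.2]) _)
      (div_nonneg (pow_nonneg (mul_nonneg hγ.le (Real.rpow_nonneg hs.1.le _)) _) (hGk k).le)
  have hFsucc : Summable (fun k : ℕ => F (k + 1)) := (summable_nat_add_iff 1).mpr hF
  have hsum' : Summable (fun k : ℕ => ∫ s in Set.Ioc (0:ℝ) t, ‖g k s‖) := by
    refine Summable.congr (hFsucc.mul_left (Real.Gamma β / γ)) ?_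
    intro k
    rw [hnorm k, hval k]
  -- interchange sum and integral
  have hinter := MeasureTheory.integral_tsum_of_summable_integral_norm
    (μ := MeasureTheory.volume.restrict (Set.Ioc (0:ℝ) t)) (F := g) hint hsum'
  have hrw : (∫ s in (0:ℝ)..t, (t - s) ^ (β - 1) * mittagLeffler β (γ * s ^ β)) =
      ∑' k : ℕ, ∫ s in Set.Ioc (0:ℝ) t, g k s := by
    rw [intervalIntegral.integral_of_le ht.le, hinter]
    refine MeasureTheory.integral_congr_ae (Filter.Eventually.of_forall fun s => ?_)
    simp only
    rw [show mittagLeffler β (γ * s ^ β)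
        = ∑' k : ℕ, (γ * s ^ β) ^ k / Real.Gamma ((k : ℝ) * β + 1) from rfl, ← tsum_mul_left]
  rw [hrw, show (∑' k : ℕ, ∫ s in Set.Ioc (0:ℝ) t, g k s)
      = ∑' k : ℕ, (Real.Gamma β / γ) * F (k + 1) from tsum_congr hval,
    tsum_mul_left, ← mul_assoc]
  have hc : γ / Real.Gamma β * (Real.Gamma β / γ) = 1 := by field_simp
  rw [hc, one_mul]
  have hML : mittagLeffler β z = F 0 + ∑' k : ℕ, F (k + 1) := by
    rw [show mittagLeffler β z = ∑' k : ℕ, F k from rfl]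
    exact Summable.tsum_eq_zero_add hF
  rw [hML]
  have hF0 : F 0 = 1 := by simp [hFdef, Real.Gamma_one]
  rw [hF0]
  linarith [le_refl (∑' k : ℕ, F (k + 1))]
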